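/- For every g ≥ 2 and t, u ∈ ℕ with u − 1 ≥ (g − 1)(t − 1), every menu selection problem with g public goods has a (t,u)-stable menu. -/

import Mathlib

structure MenuProblem (N G : Type) where
  pref : N → List G
  nodup : ∀ i, (pref i).Nodup

namespace MenuProblem

variable {N G : Type} [Fintype N] [DecidableEq G]

/-- The good assigned to agent `i` when menu `O` is offered:
its favorite ranked good in `O`, if any. -/
def assigned (P : MenuProblem N G) (O : Finset G) (i : N) : Option G :=
  (P.pref i).find? (fun a => decide (a ∈ O))

/-- Number of agents assigned to good `j` when menu `O` is offered. -/
def assignedCount (P : MenuProblem N G) (O : Finset G) (j : G) : ℕ :=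
  (Finset.univ.filter (fun i => P.assigned O i = some j)).card

/-- The lobby for a good `j` against menu `O`: the number of agents that
would take `j` if it were added to the menu. -/
def lobby (P : MenuProblem N G) (O : Finset G) (j : G) : ℕ :=
  P.assignedCount (insert j O) j

/-- `|a ≻ b|`: the number of agents that would take `a` from the menu `{a, b}`. -/
def prefCount (P : MenuProblem N G) (a b : G) : ℕ :=
  P.assignedCount {a, b} a

/-- A menu is `t`-feasible if every offered good is assigned at least `t` agents. -/
def TFeasible (P : MenuProblem N G) (O : Finset G) (t : ℕ) : Prop :=
  ∀ j ∈ O, t ≤ P.assignedCount O j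

/-- A menu is `u`-uncontestable if no unoffered good has a lobby of at least `u` agents. -/
def UUncontestable (P : MenuProblem N G) (O : Finset G) (u : ℕ) : Prop :=
  ∀ j ∉ O, P.lobby O j < u

/-- A menu is `(t,u)`-stable if it is `t`-feasible and `u`-uncontestable. -/
def Stable (P : MenuProblem N G) (O : Finset G) (t u : ℕ) : Prop :=
  P.TFeasible O t ∧ P.UUncontestable O u

end MenuProblem

section Aux

set_option linter.unusedSectionVars false

variable {N G : Type} [Fintype N] [DecidableEq N] [DecidableEq G]

omit [Fintype N] [DecidableEq N] in
lemma find?_mem_anti {l : List G} {O O' : Finset G} {k : G}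
    (hsub : O' ⊆ O) (hk : k ∈ O')
    (h : l.find? (fun a => decide (a ∈ O)) = some k) :
    l.find? (fun a => decide (a ∈ O')) = some k := by
  induction l with
  | nil => simp at h
  | cons a l ih =>
    by_cases ha : a ∈ O
    · rw [List.find?_cons_of_pos (p := fun a => decide (a ∈ O)) (by simpa using ha)] at h
      obtain rfl : a = k := by simpa using h
      rw [List.find?_cons_of_pos (p := fun a => decide (a ∈ O')) (by simpa using hk)]
    · have ha' : a ∉ O' := fun hx => ha (hsub hx)
      rw [List.find?_cons_of_neg (p := fun a => decide (a ∈ O)) (by simpa using ha)] at h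
      rw [List.find?_cons_of_neg (p := fun a => decide (a ∈ O')) (by simpa using ha')]
      exact ih h

omit [Fintype N] [DecidableEq N] in
lemma assigned_anti (P : MenuProblem N G) {O O' : Finset G} {i : N} {k : G}
    (hsub : O' ⊆ O) (hk : k ∈ O') (h : P.assigned O i = some k) :
    P.assigned O' i = some k :=
  find?_mem_anti hsub hk h

omit [Fintype N] [DecidableEq N] in
lemma mem_pref_of_assigned (P : MenuProblem N G) {O : Finset G} {i : N} {k : G}
    (h : P.assigned O i = some k) : k ∈ P.pref i :=
  List.mem_of_find?_eq_some h

omit [Fintype N] [DecidableEq N] in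
lemma mem_of_assigned (P : MenuProblem N G) {O : Finset G} {i : N} {k : G}
    (h : P.assigned O i = some k) : k ∈ O := by
  have := List.find?_some h
  simpa using this

omit [Fintype N] [DecidableEq N] in
lemma assigned_isSome (P : MenuProblem N G) {O : Finset G} {i : N} {j : G}
    (hj : j ∈ O) (hmem : j ∈ P.pref i) : ∃ k, P.assigned O i = some k := by
  have hs : (P.assigned O i).isSome := by
    rw [MenuProblem.assigned, List.find?_isSome]
    exact ⟨j, hmem, by simpa using hj⟩
  exact ⟨(P.assigned O i).get hs, (Option.some_get hs).symm⟩

variable (P : MenuProblem N G) (t : ℕ)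

/-- Repeatedly delete a good assigned fewer than `t` agents. -/
noncomputable def process (O : Finset G) : Finset G :=
  if h : ∃ k ∈ O, P.assignedCount O k < t then process (O.erase h.choose) else O
termination_by O.card
decreasing_by exact Finset.card_erase_lt_of_mem h.choose_spec.1

lemma process_subset (O : Finset G) : process P t O ⊆ O := by
  induction O using Finset.strongInduction with
  | _ O ih =>
    rw [process.eq_def]
    split
    · next h =>
      exact (ih _ (Finset.erase_ssubset h.choose_spec.1)).trans (Finset.erase_subset _ _)
    · exact subset_rfl

lemma process_feasible (O : Finset G) : P.TFeasible (process P t O) t := by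
  induction O using Finset.strongInduction with
  | _ O ih =>
    rw [process.eq_def]
    split
    · next h => exact ih _ (Finset.erase_ssubset h.choose_spec.1)
    · next h =>
      intro j hj
      by_contra hc
      exact h ⟨j, hj, by omega⟩

lemma process_ne (O : Finset G) (hne : process P t O ≠ O) :
    ∃ k ∈ O, process P t (O.erase k) = process P t O := by
  by_cases hb : ∃ k ∈ O, P.assignedCount O k < t
  · exact ⟨hb.choose, hb.choose_spec.1, by conv_rhs => rw [process.eq_def, dif_pos hb]⟩
  · exact absurd (by rw [process.eq_def, dif_neg hb]) hne

/-- Agents assigned in `O` to a good that gets deleted by the process. -/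
noncomputable def uset (O : Finset G) : Finset N :=
  Finset.univ.filter (fun i => ∃ k ∈ O \ process P t O, P.assigned O i = some k)

lemma uset_card (O : Finset G) :
    (uset P t O).card ≤ (O.card - (process P t O).card) * (t - 1) := by
  induction O using Finset.strongInduction with
  | _ O ih =>
    by_cases hb : ∃ k ∈ O, P.assignedCount O k < t
    · obtain ⟨hkO, hkcnt⟩ := hb.choose_spec
      generalize hkdef : hb.choose = k at *
      have hproc : process P t O = process P t (O.erase k) := by
        conv_lhs => rw [process.eq_def, dif_pos hb]
        rw [hkdef]
      have hsub1 : uset P t O ⊆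
          (Finset.univ.filter (fun i => P.assigned O i = some k)) ∪ uset P t (O.erase k) := by
        intro i hi
        rw [uset, Finset.mem_filter] at hi
        obtain ⟨-, k', hk', hass⟩ := hi
        rw [Finset.mem_sdiff] at hk'
        by_cases hkk : k' = k
        · subst hkk
          exact Finset.mem_union_left _ (Finset.mem_filter.mpr ⟨Finset.mem_univ _, hass⟩)
        · have hk'e : k' ∈ O.erase k := Finset.mem_erase.mpr ⟨hkk, hk'.1⟩
          have hass' : P.assigned (O.erase k) i = some k' :=
            assigned_anti P (Finset.erase_subset _ _) hk'e hass
          refine Finset.mem_union_right _ ?_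
          rw [uset, Finset.mem_filter]
          refine ⟨Finset.mem_univ _, k', ?_, hass'⟩
          rw [Finset.mem_sdiff]
          exact ⟨hk'e, by rw [← hproc]; exact hk'.2⟩
      have hcard1 : (uset P t O).card ≤
          P.assignedCount O k + (uset P t (O.erase k)).card := by
        calc (uset P t O).card ≤ _ := Finset.card_le_card hsub1
          _ ≤ _ + _ := Finset.card_union_le _ _
      have hih := ih (O.erase k) (Finset.erase_ssubset hkO)
      have hR : (process P t (O.erase k)).card ≤ (O.erase k).card :=
        Finset.card_le_card (process_subset P t _)
      have hcOe : (O.erase k).card = O.card - 1 := Finset.card_erase_of_mem hkO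
      have hO1 : 1 ≤ O.card := Finset.card_pos.mpr ⟨k, hkO⟩
      rw [hproc]
      have hkey : O.card - (process P t (O.erase k)).card
          = ((O.erase k).card - (process P t (O.erase k)).card) + 1 := by omega
      have hcnt1 : P.assignedCount O k ≤ t - 1 := by omega
      calc (uset P t O).card
          ≤ P.assignedCount O k + (uset P t (O.erase k)).card := hcard1
        _ ≤ (t - 1) + ((O.erase k).card - (process P t (O.erase k)).card) * (t - 1) :=
            Nat.add_le_add hcnt1 hih
        _ = (O.card - (process P t (O.erase k)).card) * (t - 1) := by
            rw [hkey, Nat.succ_mul, Nat.add_comm]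
    · have hproc : process P t O = O := by rw [process.eq_def, dif_neg hb]
      have : uset P t O = ∅ := by
        rw [Finset.eq_empty_iff_forall_notMem]
        intro i hi
        rw [uset, Finset.mem_filter] at hi
        obtain ⟨-, k', hk', -⟩ := hi
        rw [hproc, Finset.sdiff_self] at hk'
        simp at hk'
      simp [this]

lemma lobby_le_uset (O : Finset G) {j : G} (hj : j ∈ O) (hjn : j ∉ process P t O) :
    P.lobby (process P t O) j ≤ (uset P t O).card := by
  rw [MenuProblem.lobby, MenuProblem.assignedCount]
  apply Finset.card_le_card
  intro i hi
  rw [Finset.mem_filter] at hi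
  obtain ⟨-, hass⟩ := hi
  have hjp : j ∈ P.pref i := mem_pref_of_assigned P hass
  obtain ⟨k', hk'⟩ := assigned_isSome P hj hjp
  have hk'O : k' ∈ O := mem_of_assigned P hk'
  have hsub : insert j (process P t O) ⊆ O :=
    Finset.insert_subset hj (process_subset P t O)
  have hk'n : k' ∉ process P t O := by
    intro hR
    have := assigned_anti P hsub (Finset.mem_insert_of_mem hR) hk'
    rw [hass] at this
    exact hjn (Option.some_injective _ this ▸ hR)
  rw [uset, Finset.mem_filter]
  exact ⟨Finset.mem_univ _, k', Finset.mem_sdiff.mpr ⟨hk'O, hk'n⟩, hk'⟩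

lemma cnt_le_uset_of_empty (O : Finset G) (hO : process P t O = ∅) {j : G} (hj : j ∈ O)
    (O₂ : Finset G) : P.assignedCount O₂ j ≤ (uset P t O).card := by
  rw [MenuProblem.assignedCount]
  apply Finset.card_le_card
  intro i hi
  rw [Finset.mem_filter] at hi
  obtain ⟨-, hass⟩ := hi
  have hjp : j ∈ P.pref i := mem_pref_of_assigned P hass
  obtain ⟨k', hk'⟩ := assigned_isSome P hj hjp
  have hk'O : k' ∈ O := mem_of_assigned P hk'
  rw [uset, Finset.mem_filter]
  refine ⟨Finset.mem_univ _, k', ?_, hk'⟩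
  rw [Finset.mem_sdiff, hO]
  exact ⟨hk'O, by simp⟩

end Aux

/-- For every `g ≥ 2` and `t, u ∈ ℕ` with `u − 1 ≥ (g − 1)(t − 1)`, every menu selection
problem with `g` public goods has a `(t,u)`-stable menu. -/
theorem upper_bound_g_minus_one (g t u : ℕ) (hg : 2 ≤ g) (hu : 1 ≤ u)
    (h : (g - 1) * (t - 1) ≤ u - 1) (n : ℕ) (P : MenuProblem (Fin n) (Fin g)) :
    ∃ O : Finset (Fin g), P.Stable O t u := by
  have hcard : (Finset.univ : Finset (Fin g)).card = g := by simp
  by_cases hO : process P t (Finset.univ : Finset (Fin g)) = ∅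
  · -- the process deleted everything
    have hne : process P t (Finset.univ : Finset (Fin g)) ≠ Finset.univ := by
      rw [hO]
      intro heq
      have : ((∅ : Finset (Fin g))).card = g := by rw [heq]; exact hcard
      simp at this
      omega
    obtain ⟨k₁, hk₁, hstep⟩ := process_ne P t _ hne
    have hpe : process P t (Finset.univ.erase k₁) = ∅ := by rw [hstep, hO]
    have hbound : ∀ j, j ≠ k₁ → ∀ O' : Finset (Fin g),
        P.assignedCount O' j ≤ (g - 1) * (t - 1) := by
      intro j hj O'
      have hjO₂ : j ∈ Finset.univ.erase k₁ := Finset.mem_erase.mpr ⟨hj, Finset.mem_univ j⟩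
      calc P.assignedCount O' j ≤ (uset P t (Finset.univ.erase k₁)).card :=
            cnt_le_uset_of_empty P t _ hpe hjO₂ O'
        _ ≤ ((Finset.univ.erase k₁).card - (process P t (Finset.univ.erase k₁)).card) * (t - 1) :=
            uset_card P t _
        _ = (g - 1) * (t - 1) := by
            rw [hpe, Finset.card_erase_of_mem (Finset.mem_univ k₁), hcard]
            simp
    by_cases hk : P.lobby ∅ k₁ < u
    · refine ⟨∅, fun j hj => absurd hj (by simp), ?_⟩
      intro j _
      by_cases hjk : j = k₁
      · rw [hjk]; exact hk
      · have := hbound j hjk (insert j ∅)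
        rw [MenuProblem.lobby]
        omega
    · refine ⟨{k₁}, ?_, ?_⟩
      · intro j hj
        rw [Finset.mem_singleton] at hj
        subst hj
        have h1 : u ≤ P.lobby ∅ j := by omega
        rw [MenuProblem.lobby] at h1
        have h2 : (insert j (∅ : Finset (Fin g))) = {j} := by simp
        rw [h2] at h1
        have h3 : t - 1 ≤ (g - 1) * (t - 1) := Nat.le_mul_of_pos_left _ (by omega)
        omega
      · intro j hj
        rw [Finset.mem_singleton] at hj
        have := hbound j hj (insert j {k₁})
        rw [MenuProblem.lobby]
        omega
  · -- the process result is nonempty: it is stable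
    refine ⟨process P t Finset.univ, process_feasible P t _, ?_⟩
    intro j hj
    have hcard1 : 1 ≤ (process P t (Finset.univ : Finset (Fin g))).card :=
      Finset.card_pos.mpr (Finset.nonempty_iff_ne_empty.mpr hO)
    have hcard2 : (process P t (Finset.univ : Finset (Fin g))).card ≤ g := by
      have := Finset.card_le_card (process_subset P t (Finset.univ : Finset (Fin g)))
      rw [hcard] at this
      exact this
    have h1 : P.lobby (process P t Finset.univ) j ≤ (uset P t Finset.univ).card :=
      lobby_le_uset P t _ (Finset.mem_univ j) hj
    have h2 := uset_card P t (Finset.univ : Finset (Fin g))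
    rw [hcard] at h2
    have h3 : (g - (process P t (Finset.univ : Finset (Fin g))).card) * (t - 1)
        ≤ (g - 1) * (t - 1) := Nat.mul_le_mul_right _ (by omega)
    omega
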